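/- If (δ, ε) is a tree-like pair of maps, then there is a unique least-resolved vertex- and edge-labeled tree (T*, t*, λ*) explaining (δ, ε): its tree T* is the unique tree with cluster system H(T*) = H(T_δ) ∪ H(T_ε), its vertex labeling t* is uniquely determined by δ, and λ* is the unique edge labeling of T* explaining ε with minimum total label count Σ_e |λ*(e)|. Moreover, contracting any edge of T* yields a tree that cannot explain (δ, ε) with any labelings. -/

import Mathlib

/-- A rooted phylogenetic tree with leaf set `L`: a finite vertex type `V`,
a root, a parent map (the root is its own parent), every vertex reaches the
root by iterating `parent`, the leaves are exactly the vertices without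
children and are in bijection with `L`, and every inner vertex has at least
two children. -/
structure PhyloTree (L : Type) : Type 1 where
  V : Type
  fintypeV : Fintype V
  root : V
  parent : V → V
  leaf : L → V
  parent_root : parent root = root
  reach : ∀ v : V, ∃ n : ℕ, parent^[n] v = root
  leaf_inj : Function.Injective leaf
  leaf_iff : ∀ v : V, (∀ u : V, parent u = v → u = v) ↔ ∃ x : L, leaf x = v
  phylo : ∀ v : V, (¬ ∃ x : L, leaf x = v) →
      ∃ u u' : V, u ≠ u' ∧ parent u = v ∧ parent u' = v ∧ u ≠ v ∧ u' ≠ v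

namespace PhyloTree

variable {L : Type} (T : PhyloTree L)

/-- `v` is an ancestor (or equal) of `w`. -/
def anc (v w : T.V) : Prop := ∃ n : ℕ, T.parent^[n] w = v

def isLeaf (v : T.V) : Prop := ∃ x : L, T.leaf x = v

/-- The cluster `L(T(v))`: the set of leaves below `v`. -/
def cluster (v : T.V) : Set L := {x : L | T.anc v (T.leaf x)}

/-- The cluster system `H(T)`. -/
def clusters : Set (Set L) := Set.range T.cluster

/-- `w` is the last common ancestor of the leaves `x` and `y`. -/
def isLCA (x y : L) (w : T.V) : Prop :=
  T.anc w (T.leaf x) ∧ T.anc w (T.leaf y) ∧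
    ∀ u : T.V, T.anc u (T.leaf x) → T.anc u (T.leaf y) → T.anc u w

/-- `u` is a child of `v`. -/
def childOf (u v : T.V) : Prop := T.parent u = v ∧ u ≠ v

/-- The edge `{parent u, u}` (encoded by its lower endpoint `u`) is an inner edge. -/
def innerEdge (u : T.V) : Prop := T.parent u ≠ u ∧ ¬ T.isLeaf u

/-- The edge `{parent u, u}` lies on the path from the vertex `w` down to the leaf `y`. -/
def onPath (w : T.V) (y : L) (u : T.V) : Prop :=
  T.anc w u ∧ u ≠ w ∧ T.anc u (T.leaf y)

/-- The vertex-labeled tree `(T,t)` explains `δ`. -/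
def ExplainsDelta {M : Type} (t : T.V → M) (δ : L → L → M) : Prop :=
  ∀ x y : L, x ≠ y → ∀ w : T.V, T.isLCA x y w → t w = δ x y

/-- The edge-labeled tree `(T,λ)` explains `ε`; edge labels are encoded on the
lower endpoint of each edge. -/
def ExplainsEps {N : Type} (lam : T.V → Finset N) (ε : L → L → Finset N) : Prop :=
  ∀ x y : L, x ≠ y → ∀ w : T.V, T.isLCA x y w →
    ∀ k : N, k ∈ ε x y ↔ ∃ u : T.V, T.onPath w y u ∧ k ∈ lam u

/-- The vertex labeling is discriminating: the endpoints of every inner edge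
carry distinct labels. -/
def Discriminating {M : Type} (t : T.V → M) : Prop :=
  ∀ u : T.V, T.innerEdge u → t u ≠ t (T.parent u)

/-- Total number of labels over all edges, `Σ_{e ∈ E(T)} |λ(e)|`. -/
noncomputable def labelSum {N : Type} (lam : T.V → Finset N) : ℕ :=
  letI := T.fintypeV
  letI := Classical.decEq T.V
  ∑ v : T.V, if T.parent v = v then 0 else (lam v).card

/-- Condition (C): every inner vertex has a child joined by an empty-labeled edge. -/
def CondC {N : Type} (lam : T.V → Finset N) : Prop :=
  ∀ v : T.V, ¬ T.isLeaf v → ∃ u : T.V, T.childOf u v ∧ lam u = ∅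

/-- Condition (C1): if `t(v) ∈ M₀` then all edges from `v` to its children are empty. -/
def CondC1 {M N : Type} (t : T.V → M) (lam : T.V → Finset N) (M0 : Set M) : Prop :=
  ∀ v u : T.V, T.childOf u v → t v ∈ M0 → lam u = ∅

/-- Condition (C2): at every vertex, at most one edge to a child is nonempty. -/
def CondC2 {N : Type} (lam : T.V → Finset N) : Prop :=
  ∀ v u u' : T.V, T.childOf u v → T.childOf u' v → lam u ≠ ∅ → lam u' ≠ ∅ → u = u'

/-- `(T1,λ1) ≤ (T2,λ2)`: the edge-labeled tree `(T2,λ2)` refines `(T1,λ1)`. -/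
def LeLabeled {N : Type} (T1 : PhyloTree L) (lam1 : T1.V → Finset N)
    (T2 : PhyloTree L) (lam2 : T2.V → Finset N) : Prop :=
  T1.clusters ⊆ T2.clusters ∧
    ∀ (v1 : T1.V) (v2 : T2.V), T1.parent v1 ≠ v1 → T2.parent v2 ≠ v2 →
      T1.cluster v1 = T2.cluster v2 → lam1 v1 ⊆ lam2 v2

/-- `φ` witnesses that `T'` is obtained from `T` by contracting the inner edge
`{parent u, u}`. -/
def IsContractionMap (T : PhyloTree L) (u : T.V) (T' : PhyloTree L)
    (φ : T.V → T'.V) : Prop :=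
  T.innerEdge u ∧ Function.Surjective φ ∧ φ u = φ (T.parent u) ∧
    (∀ a b : T.V, φ a = φ b →
      a = b ∨ (a = u ∧ b = T.parent u) ∨ (b = u ∧ a = T.parent u)) ∧
    (∀ v : T.V, v ≠ u → T'.parent (φ v) = φ (T.parent v)) ∧
    (∀ x : L, φ (T.leaf x) = T'.leaf x) ∧ φ T.root = T'.root

/-- `T'` is obtained from `T` by contracting the inner edge `{parent u, u}`. -/
def ContractEdge (T : PhyloTree L) (u : T.V) (T' : PhyloTree L) : Prop :=
  ∃ φ : T.V → T'.V, IsContractionMap T u T' φ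

/-- Isomorphism of rooted trees on the same leaf set. -/
def Isomorphic (T1 T2 : PhyloTree L) : Prop :=
  ∃ φ : T1.V ≃ T2.V, (∀ v : T1.V, φ (T1.parent v) = T2.parent (φ v)) ∧
    ∀ x : L, φ (T1.leaf x) = T2.leaf x

def IsSymbolicUltrametric {M : Type} (δ : L → L → M) : Prop :=
  ∃ (T : PhyloTree L) (t : T.V → M), T.ExplainsDelta t δ

def IsFitchMap {N : Type} (ε : L → L → Finset N) : Prop :=
  ∃ (T : PhyloTree L) (lam : T.V → Finset N), T.ExplainsEps lam ε

def TreeLike {M N : Type} (δ : L → L → M) (ε : L → L → Finset N) : Prop :=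
  ∃ (T : PhyloTree L) (t : T.V → M) (lam : T.V → Finset N),
    T.ExplainsDelta t δ ∧ T.ExplainsEps lam ε

def MTreeLike {M N : Type} (δ : L → L → M) (ε : L → L → Finset N) (M0 : Set M) : Prop :=
  ∃ (T : PhyloTree L) (t : T.V → M) (lam : T.V → Finset N),
    T.ExplainsDelta t δ ∧ T.ExplainsEps lam ε ∧ T.CondC lam ∧ T.CondC1 t lam M0

end PhyloTree

/-- A hierarchy on `L`. -/
def IsHierarchy {L : Type} (H : Set (Set L)) : Prop :=
  Set.univ ∈ H ∧ (∀ x : L, {x} ∈ H) ∧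
    (∀ A ∈ H, ∀ B ∈ H, A ∩ B = A ∨ A ∩ B = B ∨ A ∩ B = (∅ : Set L)) ∧
    (∅ : Set L) ∉ H
namespace PhyloTree

variable {L : Type} {T : PhyloTree L}

lemma anc_refl (v : T.V) : T.anc v v := ⟨0, rfl⟩

lemma anc_trans {u v w : T.V} (h1 : T.anc u v) (h2 : T.anc v w) : T.anc u w := by
  obtain ⟨n, hn⟩ := h1; obtain ⟨m, hm⟩ := h2
  exact ⟨n + m, by rw [Function.iterate_add_apply, hm, hn]⟩

lemma anc_iterate (n : ℕ) (v : T.V) : T.anc (T.parent^[n] v) v := ⟨n, rfl⟩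

lemma anc_parent (v : T.V) : T.anc (T.parent v) v := ⟨1, rfl⟩

lemma anc_root (v : T.V) : T.anc T.root v := T.reach v

lemma root_iterate (n : ℕ) : T.parent^[n] T.root = T.root := by
  induction n with
  | zero => rfl
  | succ n ih => rw [Function.iterate_succ_apply', ih, T.parent_root]

lemma iterate_fixed {v : T.V} (h : T.parent v = v) (n : ℕ) : T.parent^[n] v = v := by
  induction n with
  | zero => rfl
  | succ n ih => rw [Function.iterate_succ_apply, h, ih]

lemma fixed_eq_root {v : T.V} (h : T.parent v = v) : v = T.root := by
  obtain ⟨n, hn⟩ := T.reach v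
  rw [← hn, iterate_fixed h]

lemma periodic_eq_root {v : T.V} {k : ℕ} (hk : 0 < k) (h : T.parent^[k] v = v) :
    v = T.root := by
  obtain ⟨n, hn⟩ := T.reach v
  have hmul : ∀ m : ℕ, T.parent^[m * k] v = v := by
    intro m
    induction m with
    | zero => simp
    | succ m ih => rw [Nat.succ_mul, Function.iterate_add_apply, h, ih]
  have h1 : T.parent^[(n + 1) * k] v = v := hmul (n + 1)
  have h2 : (n + 1) * k = ((n + 1) * k - n) + n := by
    have : n ≤ (n + 1) * k := by nlinarith
    omega
  rw [h2, Function.iterate_add_apply, hn, root_iterate] at h1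
  exact h1.symm

lemma anc_antisymm {u v : T.V} (h1 : T.anc u v) (h2 : T.anc v u) : u = v := by
  obtain ⟨n, hn⟩ := h1; obtain ⟨m, hm⟩ := h2
  rcases Nat.eq_zero_or_pos (n + m) with h | h
  · have : n = 0 := by omega
    rw [this] at hn; exact hn.symm
  · have hper : T.parent^[n + m] u = u := by
      rw [Function.iterate_add_apply, hm, hn]
    have hu : u = T.root := periodic_eq_root h hper
    have hv : v = T.root := by rw [← hm, hu, root_iterate]
    rw [hu, hv]

end PhyloTree

namespace PhyloTree

variable {L : Type} {T : PhyloTree L}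

/-- Any two ancestors of the same vertex are comparable. -/
lemma anc_comparable {u v w : T.V} (h1 : T.anc u w) (h2 : T.anc v w) :
    T.anc u v ∨ T.anc v u := by
  obtain ⟨n, hn⟩ := h1; obtain ⟨m, hm⟩ := h2
  rcases le_total n m with h | h
  · right
    refine ⟨m - n, ?_⟩
    rw [← hn, ← Function.iterate_add_apply, Nat.sub_add_cancel h, hm]
  · left
    refine ⟨n - m, ?_⟩
    rw [← hm, ← Function.iterate_add_apply, Nat.sub_add_cancel h, hn]

lemma mem_cluster {x : L} {v : T.V} : x ∈ T.cluster v ↔ T.anc v (T.leaf x) := Iff.rfl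

lemma cluster_mono {u v : T.V} (h : T.anc u v) : T.cluster v ⊆ T.cluster u :=
  fun _ hx => anc_trans h hx

lemma cluster_root : T.cluster T.root = Set.univ :=
  Set.eq_univ_of_forall fun x => anc_root (T.leaf x)

lemma anc_leaf_eq {x : L} {w : T.V} (h : T.anc (T.leaf x) w) : w = T.leaf x := by
  obtain ⟨n, hn⟩ := h
  induction n generalizing w with
  | zero => exact hn
  | succ n ih =>
    rw [Function.iterate_succ_apply'] at hn
    exact ih (((T.leaf_iff (T.leaf x)).mpr ⟨x, rfl⟩) _ hn)

lemma cluster_leaf (x : L) : T.cluster (T.leaf x) = {x} := by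
  ext y
  simp only [mem_cluster, Set.mem_singleton_iff]
  constructor
  · intro h
    exact T.leaf_inj (anc_leaf_eq h)
  · rintro rfl; exact anc_refl _

open Classical in
/-- The depth of a vertex: distance to the root. -/
noncomputable def depth (T : PhyloTree L) (v : T.V) : ℕ := Nat.find (T.reach v)

lemma depth_spec (v : T.V) : T.parent^[T.depth v] v = T.root := by
  classical
  exact Nat.find_spec (T.reach v)

lemma depth_min {v : T.V} {n : ℕ} (h : n < T.depth v) : T.parent^[n] v ≠ T.root := by
  classical
  exact Nat.find_min (T.reach v) h

lemma depth_le {v : T.V} {n : ℕ} (h : T.parent^[n] v = T.root) : T.depth v ≤ n := by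
  by_contra hc
  exact depth_min (by omega) h

lemma depth_root : T.depth T.root = 0 :=
  Nat.le_zero.mp (depth_le (by simp))

lemma depth_eq_zero {v : T.V} (h : T.depth v = 0) : v = T.root := by
  have := depth_spec (T := T) v
  rw [h] at this
  simpa using this

lemma depth_child {u v : T.V} (h : T.childOf u v) : T.depth u = T.depth v + 1 := by
  obtain ⟨hp, hne⟩ := h
  have hpos : 0 < T.depth u := by
    rcases Nat.eq_zero_or_pos (T.depth u) with h0 | h0
    · exfalso
      have hroot : u = T.root := depth_eq_zero h0
      exact hne (by rw [hroot, ← hp, hroot, T.parent_root])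
    · exact h0
  have h1 : T.depth v ≤ T.depth u - 1 := by
    apply depth_le
    have : T.parent^[T.depth u - 1] (T.parent u) = T.root := by
      rw [← Function.iterate_succ_apply]
      have h9 : (T.depth u - 1).succ = T.depth u := by omega
      rw [h9]
      exact depth_spec u
    rw [hp] at this
    exact this
  have h2 : T.depth u ≤ T.depth v + 1 := by
    apply depth_le
    rw [Function.iterate_succ_apply, hp]
    exact depth_spec v
  omega

lemma iterate_inj_upto {v : T.V} {i j : ℕ} (hi : i ≤ T.depth v) (hj : j ≤ T.depth v)
    (h : T.parent^[i] v = T.parent^[j] v) : i = j := by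
  by_contra hne
  have key : ∀ i j : ℕ, i < j → j ≤ T.depth v → T.parent^[i] v = T.parent^[j] v → False := by
    intro i j hlt hjd hij
    have hper : T.parent^[j - i] (T.parent^[i] v) = T.parent^[i] v := by
      rw [← Function.iterate_add_apply, Nat.sub_add_cancel hlt.le, hij]
    have := periodic_eq_root (by omega) hper
    exact depth_min (show i < T.depth v by omega) this
  rcases Nat.lt_or_ge i j with hlt | hge
  · exact key i j hlt hj h
  · exact key j i (by omega) hi h.symm

lemma depth_lt_card [Fintype T.V] (v : T.V) : T.depth v < Fintype.card T.V := by
  have hinj : Function.Injective (fun i : Fin (T.depth v + 1) => T.parent^[i.1] v) := by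
    intro i j hij
    exact Fin.ext (iterate_inj_upto (by omega) (by omega) hij)
  have := Fintype.card_le_of_injective _ hinj
  simpa using this

/-- Every vertex has a leaf below it. -/
lemma exists_leaf_below (v : T.V) : ∃ x : L, T.anc v (T.leaf x) := by
  haveI := T.fintypeV
  by_contra hcon
  push_neg at hcon
  have key : ∀ n : ℕ, ∀ w : T.V, (∀ x, ¬ T.anc w (T.leaf x)) →
      Fintype.card T.V - T.depth w ≤ n → False := by
    intro n
    induction n with
    | zero =>
      intro w _ hle
      have := depth_lt_card w; omega
    | succ n ih =>
      intro w hw hle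
      have hnotleaf : ¬ T.isLeaf w := by
        rintro ⟨x, rfl⟩
        exact hw x (anc_refl _)
      obtain ⟨u, u', _, hu, _, hune, _⟩ := T.phylo w hnotleaf
      have hdu : T.depth u = T.depth w + 1 := depth_child ⟨hu, hune⟩
      have hwu : ∀ x, ¬ T.anc u (T.leaf x) := by
        intro x hx
        exact hw x (anc_trans ⟨1, hu⟩ hx)
      exact ih u hwu (by omega)
  exact key (Fintype.card T.V) v hcon (by omega)

lemma cluster_nonempty (v : T.V) : (T.cluster v).Nonempty := exists_leaf_below v

end PhyloTree

namespace PhyloTree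

variable {L : Type} {T : PhyloTree L}

lemma cluster_disjoint {u v : T.V} (h1 : ¬ T.anc u v) (h2 : ¬ T.anc v u) :
    T.cluster u ∩ T.cluster v = ∅ := by
  by_contra h
  obtain ⟨x, hxu, hxv⟩ := Set.nonempty_iff_ne_empty.mpr h
  rcases anc_comparable (w := T.leaf x) hxu hxv with h | h
  · exact h1 h
  · exact h2 h

/-- Distinct children of the same vertex are incomparable. -/
lemma children_incomparable {c c' v : T.V} (hc : T.childOf c v) (hc' : T.childOf c' v)
    (hne : c ≠ c') (h : T.anc c c') : False := by
  obtain ⟨n, hn⟩ := h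
  have hn1 : 1 ≤ n := by
    rcases Nat.eq_zero_or_pos n with h0 | h0
    · rw [h0] at hn; exact (hne (by simpa using hn.symm)).elim
    · exact h0
  have hanc : T.anc c v := by
    refine ⟨n - 1, ?_⟩
    have h2 : T.parent^[n - 1] (T.parent c') = T.parent^[n] c' := by
      rw [← Function.iterate_succ_apply]
      congr 1
      omega
    rw [← hc'.1, h2, hn]
  have hanc2 : T.anc v c := ⟨1, hc.1⟩
  exact hc.2 (anc_antisymm hanc2 hanc).symm

/-- If `v` is a strict ancestor of `w`, then `w` lies below some child of `v`. -/
lemma exists_child_anc {v w : T.V} (h : T.anc v w) (hne : w ≠ v) :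
    ∃ c : T.V, T.childOf c v ∧ T.anc c w := by
  classical
  have hex : ∃ n, T.parent^[n] w = v := h
  set n := Nat.find hex with hn
  have hspec : T.parent^[n] w = v := Nat.find_spec hex
  have hn1 : 1 ≤ n := by
    rcases Nat.eq_zero_or_pos n with h0 | h0
    · rw [h0] at hspec; exact absurd hspec hne
    · exact h0
  refine ⟨T.parent^[n - 1] w, ⟨?_, ?_⟩, ⟨n - 1, rfl⟩⟩
  · have h2 : T.parent^[n - 1 + 1] w = v := by
      have h3 : n - 1 + 1 = n := by omega
      rw [h3]; exact hspec
    rw [Function.iterate_succ_apply'] at h2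
    exact h2
  · intro hcv
    exact Nat.find_min hex (m := n - 1) (by omega) hcv

lemma cluster_subset_iff {u v : T.V} : T.cluster u ⊆ T.cluster v ↔ T.anc v u := by
  constructor
  · intro hsub
    obtain ⟨x, hx⟩ := cluster_nonempty u
    have hxv : x ∈ T.cluster v := hsub hx
    rcases anc_comparable (w := T.leaf x) hx hxv with h | h
    · by_cases heq : u = v
      · rw [heq]; exact anc_refl v
      · exfalso
        have hnotleaf : ¬ T.isLeaf u := by
          rintro ⟨y, rfl⟩
          exact heq (anc_leaf_eq h).symm
        obtain ⟨c, c', hcc', hpc, hpc', hcv, hc'v⟩ := T.phylo u hnotleaf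
        obtain ⟨c0, hc0, hc0v⟩ := exists_child_anc h (Ne.symm heq)
        have hd : ∃ d, T.childOf d u ∧ d ≠ c0 := by
          by_cases h1 : c = c0
          · exact ⟨c', ⟨hpc', hc'v⟩, by rw [← h1]; exact hcc'.symm⟩
          · exact ⟨c, ⟨hpc, hcv⟩, h1⟩
        obtain ⟨d, hd, hdne⟩ := hd
        obtain ⟨y, hy⟩ := cluster_nonempty d
        have hyu : y ∈ T.cluster u := cluster_mono ⟨1, hd.1⟩ hy
        have hyc0 : y ∈ T.cluster c0 := cluster_mono hc0v (hsub hyu)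
        have := cluster_disjoint (u := d) (v := c0)
          (fun hh => children_incomparable hd hc0 hdne hh)
          (fun hh => children_incomparable hc0 hd (Ne.symm hdne) hh)
        exact absurd this (by rw [Set.eq_empty_iff_forall_notMem]; push_neg; exact ⟨y, hy, hyc0⟩)
    · exact h
  · exact cluster_mono

lemma cluster_inj {u v : T.V} (h : T.cluster u = T.cluster v) : u = v :=
  anc_antisymm (cluster_subset_iff.mp h.ge) (cluster_subset_iff.mp h.le)

lemma parent_ne_iff {v : T.V} : T.parent v ≠ v ↔ v ≠ T.root := by
  constructor
  · intro h hv; exact h (by rw [hv, T.parent_root])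
  · intro h hp; exact h (fixed_eq_root hp)

lemma cluster_eq_univ_iff {v : T.V} : T.cluster v = Set.univ ↔ v = T.root := by
  constructor
  · intro h; exact cluster_inj (by rw [h, cluster_root])
  · rintro rfl; exact cluster_root

lemma cluster_eq_singleton_iff {v : T.V} {x : L} : T.cluster v = {x} ↔ v = T.leaf x := by
  constructor
  · intro h; exact cluster_inj (by rw [h, cluster_leaf])
  · rintro rfl; exact cluster_leaf x

lemma not_isLeaf_of_two {v : T.V} {x y : L} (hx : x ∈ T.cluster v) (hy : y ∈ T.cluster v)
    (hxy : x ≠ y) : ¬ T.isLeaf v := by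
  rintro ⟨z, rfl⟩
  rw [cluster_leaf] at hx hy
  exact hxy (hx.trans hy.symm)

end PhyloTree

namespace PhyloTree

variable {L : Type} {T : PhyloTree L}

lemma lca_aux (T : PhyloTree L) (x y : L) : ∃ n, T.anc (T.parent^[n] (T.leaf x)) (T.leaf y) := by
  obtain ⟨n, hn⟩ := T.reach (T.leaf x)
  exact ⟨n, by rw [hn]; exact anc_root _⟩

open Classical in
/-- The last common ancestor of two leaves. -/
noncomputable def lcaV (T : PhyloTree L) (x y : L) : T.V :=
  T.parent^[Nat.find (lca_aux T x y)] (T.leaf x)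

lemma isLCA_lcaV (T : PhyloTree L) (x y : L) : T.isLCA x y (T.lcaV x y) := by
  classical
  refine ⟨⟨_, rfl⟩, Nat.find_spec (lca_aux T x y), ?_⟩
  intro u hux huy
  obtain ⟨j, hj⟩ := hux
  have hge : Nat.find (lca_aux T x y) ≤ j := by
    by_contra hlt
    push_neg at hlt
    exact Nat.find_min (lca_aux T x y) hlt (by rw [hj]; exact huy)
  exact ⟨j - Nat.find (lca_aux T x y), by
    rw [lcaV, ← Function.iterate_add_apply, Nat.sub_add_cancel hge, hj]⟩

lemma isLCA_unique {x y : L} {w w' : T.V} (h : T.isLCA x y w) (h' : T.isLCA x y w') :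
    w = w' :=
  anc_antisymm (h'.2.2 w h.1 h.2.1) (h.2.2 w' h'.1 h'.2.1)

/-- The cluster of the lca is contained in every cluster containing both leaves. -/
lemma lca_cluster_min {x y : L} {w : T.V} (h : T.isLCA x y w) {u : T.V}
    (hx : x ∈ T.cluster u) (hy : y ∈ T.cluster u) : T.cluster w ⊆ T.cluster u :=
  cluster_mono (h.2.2 u hx hy)

lemma mem_cluster_lca_left {x y : L} {w : T.V} (h : T.isLCA x y w) : x ∈ T.cluster w := h.1

lemma mem_cluster_lca_right {x y : L} {w : T.V} (h : T.isLCA x y w) : y ∈ T.cluster w := h.2.1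

/-- Leaves below distinct children of `v` have `v` as their lca. -/
lemma isLCA_of_diff_children {x y : L} {c c' v : T.V} (hc : T.childOf c v)
    (hc' : T.childOf c' v) (hne : c ≠ c') (hx : T.anc c (T.leaf x)) (hy : T.anc c' (T.leaf y)) :
    T.isLCA x y v := by
  refine ⟨anc_trans ⟨1, hc.1⟩ hx, anc_trans ⟨1, hc'.1⟩ hy, ?_⟩
  intro u hux huy
  have hvx : T.anc v (T.leaf x) := anc_trans ⟨1, hc.1⟩ hx
  rcases anc_comparable hux hvx with h | h
  ·
    exact h
  · -- v anc u: u strictly below v leads to contradiction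
    by_cases heq : u = v
    · rw [heq]; exact anc_refl v
    · exfalso
      obtain ⟨c0, hc0, hc0u⟩ := exists_child_anc h heq
      have hx0 : T.anc c0 (T.leaf x) := anc_trans hc0u hux
      have hy0 : T.anc c0 (T.leaf y) := anc_trans hc0u huy
      have h1 : c0 = c := by
        by_contra hne1
        rcases anc_comparable hx0 hx with hh | hh
        · exact children_incomparable hc0 hc hne1 hh
        · exact children_incomparable hc hc0 (Ne.symm hne1) hh
      have h2 : c0 = c' := by
        by_contra hne1
        rcases anc_comparable hy0 hy with hh | hh
        · exact children_incomparable hc0 hc' hne1 hh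
        · exact children_incomparable hc' hc0 (Ne.symm hne1) hh
      exact hne (h1 ▸ h2)

/-- If `w` is the lca of two distinct leaves, they lie below distinct children of `w`. -/
lemma lca_children {x y : L} {w : T.V} (h : T.isLCA x y w) (hxy : x ≠ y) :
    ∃ c c' : T.V, T.childOf c w ∧ T.childOf c' w ∧ c ≠ c' ∧
      T.anc c (T.leaf x) ∧ T.anc c' (T.leaf y) := by
  have hlx : T.leaf x ≠ w := by
    intro hw
    have h2 : T.anc (T.leaf x) (T.leaf y) := hw ▸ h.2.1
    exact hxy (T.leaf_inj (anc_leaf_eq h2)).symm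
  have hly : T.leaf y ≠ w := by
    intro hw
    have h2 : T.anc (T.leaf y) (T.leaf x) := hw ▸ h.1
    exact hxy (T.leaf_inj (anc_leaf_eq h2))
  obtain ⟨c, hc, hcx⟩ := exists_child_anc h.1 hlx
  obtain ⟨c', hc', hc'y⟩ := exists_child_anc h.2.1 hly
  refine ⟨c, c', hc, hc', ?_, hcx, hc'y⟩
  intro hcc
  subst hcc
  have : T.anc c w := h.2.2 c hcx (hc'y)
  exact hc.2 (anc_antisymm ⟨1, hc.1⟩ this).symm

/-- In a cluster with at least two elements, the vertex is not a leaf. -/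
lemma isLCA_exists (T : PhyloTree L) (x y : L) : ∃ w, T.isLCA x y w := ⟨_, isLCA_lcaV T x y⟩

lemma clusters_hierarchy (T : PhyloTree L) : IsHierarchy T.clusters := by
  refine ⟨⟨T.root, cluster_root⟩, fun x => ⟨T.leaf x, cluster_leaf x⟩, ?_, ?_⟩
  · rintro A ⟨u, rfl⟩ B ⟨v, rfl⟩
    by_cases h1 : T.anc u v
    · right; left
      rw [Set.inter_eq_right.mpr (cluster_mono h1)]
    · by_cases h2 : T.anc v u
      · left
        rw [Set.inter_eq_left.mpr (cluster_mono h2)]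
      · right; right
        exact cluster_disjoint h1 h2
  · rintro ⟨v, hv⟩
    exact (Set.nonempty_iff_ne_empty.mp (cluster_nonempty v)) hv

end PhyloTree

namespace PhyloTree

variable {L : Type} {T : PhyloTree L}

lemma anc_parent_of_strict {u v : T.V} (h : T.anc u v) (hne : u ≠ v) :
    T.anc u (T.parent v) := by
  obtain ⟨n, hn⟩ := h
  have hn1 : 1 ≤ n := by
    rcases Nat.eq_zero_or_pos n with h0 | h0
    · rw [h0] at hn; exact (hne hn.symm).elim
    · exact h0
  refine ⟨n - 1, ?_⟩
  have h2 : T.parent^[n - 1 + 1] v = u := by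
    have h3 : n - 1 + 1 = n := by omega
    rw [h3]; exact hn
  rw [Function.iterate_succ_apply] at h2
  exact h2

/-- Two trees with the same cluster system are isomorphic. -/
lemma iso_of_clusters_eq {T1 T2 : PhyloTree L} (h : T1.clusters = T2.clusters) :
    T1.Isomorphic T2 := by
  classical
  have hex : ∀ v : T1.V, ∃ w : T2.V, T2.cluster w = T1.cluster v := by
    intro v
    have : T1.cluster v ∈ T2.clusters := h ▸ ⟨v, rfl⟩
    obtain ⟨w, hw⟩ := this
    exact ⟨w, hw⟩
  choose φ hφ using hex
  have hbij : Function.Bijective φ := by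
    constructor
    · intro a b hab
      apply cluster_inj (T := T1)
      rw [← hφ a, ← hφ b, hab]
    · intro w
      have : T2.cluster w ∈ T1.clusters := h ▸ ⟨w, rfl⟩
      obtain ⟨v, hv⟩ := this
      exact ⟨v, cluster_inj (by rw [hφ v, hv])⟩
  refine ⟨Equiv.ofBijective φ hbij, ?_, ?_⟩
  · intro v
    simp only [Equiv.ofBijective_apply]
    by_cases hv : v = T1.root
    · have hφr : φ T1.root = T2.root := cluster_inj (by rw [hφ, cluster_root, cluster_root])
      rw [hv, T1.parent_root, hφr, T2.parent_root]
    · apply cluster_inj (T := T2)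
      rw [hφ]
      apply Set.Subset.antisymm
      · -- cluster1 (parent1 v) ⊆ cluster2 (parent2 (φ v))
        have hne2 : φ v ≠ T2.root := by
          intro hr
          have : T2.cluster (φ v) = Set.univ := by rw [hr, cluster_root]
          rw [hφ] at this
          exact hv (cluster_eq_univ_iff.mp this)
        have : T2.cluster (T2.parent (φ v)) ∈ T1.clusters := h ▸ ⟨_, rfl⟩
        obtain ⟨u', hu'⟩ := this
        have hsub : T1.cluster v ⊆ T1.cluster u' := by
          rw [hu']
          rw [← hφ]
          exact cluster_mono (anc_parent _)
        have hanc : T1.anc u' v := cluster_subset_iff.mp hsub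
        have hneu : u' ≠ v := by
          intro he
          subst he
          have : T2.cluster (φ u') = T2.cluster (T2.parent (φ u')) := by rw [hφ, hu']
          exact (parent_ne_iff.mpr hne2) (cluster_inj this.symm)
        have := anc_parent_of_strict hanc hneu
        calc T1.cluster (T1.parent v) ⊆ T1.cluster u' := cluster_mono this
          _ = T2.cluster (T2.parent (φ v)) := hu'
      · -- cluster2 (parent2 (φ v)) ⊆ cluster1 (parent1 v)
        have : T1.cluster (T1.parent v) ∈ T2.clusters := h.symm ▸ ⟨_, rfl⟩
        obtain ⟨u, hu⟩ := this
        have hsub : T2.cluster (φ v) ⊆ T2.cluster u := by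
          rw [hu, hφ]
          exact cluster_mono (anc_parent _)
        have hanc : T2.anc u (φ v) := cluster_subset_iff.mp hsub
        have hneu : u ≠ φ v := by
          intro he
          subst he
          have : T1.cluster v = T1.cluster (T1.parent v) := by rw [← hφ, hu]
          exact (parent_ne_iff.mpr hv) (cluster_inj this.symm)
        have := anc_parent_of_strict hanc hneu
        calc T2.cluster (T2.parent (φ v)) ⊆ T2.cluster u := cluster_mono this
          _ = T1.cluster (T1.parent v) := hu
  · intro x
    simp only [Equiv.ofBijective_apply]
    apply cluster_inj (T := T2)
    rw [hφ, cluster_leaf, cluster_leaf]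

end PhyloTree

section HierarchyTree

variable {L : Type}

lemma hier_nonempty {H : Set (Set L)} (hH : IsHierarchy H) {C : Set L} (hC : C ∈ H) :
    C.Nonempty := by
  rcases C.eq_empty_or_nonempty with h | h
  · exact absurd (h ▸ hC) hH.2.2.2
  · exact h

lemma hier_comparable {H : Set (Set L)} (hH : IsHierarchy H) {A B : Set L}
    (hA : A ∈ H) (hB : B ∈ H) (hne : (A ∩ B).Nonempty) : A ⊆ B ∨ B ⊆ A := by
  rcases hH.2.2.1 A hA B hB with h | h | h
  · left; rw [← h]; exact Set.inter_subset_right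
  · right; rw [← h]; exact Set.inter_subset_left
  · rw [h] at hne; exact absurd rfl (Set.nonempty_iff_ne_empty.mp hne)

/-- existence of the minimal strict superset within a finite hierarchy -/
lemma hier_exists_min {H : Set (Set L)} (hH : IsHierarchy H) (hfin : H.Finite)
    {C : Set L} (hC : C ∈ H) (hne : C ≠ Set.univ) :
    ∃ P, P ∈ H ∧ C ⊂ P ∧ ∀ A ∈ H, C ⊂ A → P ⊆ A := by
  classical
  set S : Set (Set L) := {A ∈ H | C ⊂ A} with hS
  have hSfin : S.Finite := hfin.subset (fun A hA => hA.1)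
  have hSne : S.Nonempty := ⟨Set.univ, hH.1, Set.ssubset_univ_iff.mpr hne⟩
  obtain ⟨P, hPS, hPmin⟩ : ∃ P ∈ S, ∀ A ∈ S, id A ≤ id P → id P = id A := by
    obtain ⟨P, hP⟩ := Set.Finite.exists_minimal hSfin hSne
    exact ⟨P, hP.1, fun A hA h => le_antisymm (hP.2 hA h) h⟩
  refine ⟨P, hPS.1, hPS.2, ?_⟩
  intro A hA hCA
  have hAS : A ∈ S := ⟨hA, hCA⟩
  have hcomp : P ⊆ A ∨ A ⊆ P := by
    apply hier_comparable hH hPS.1 hA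
    obtain ⟨x, hx⟩ := hier_nonempty hH hC
    exact ⟨x, hPS.2.1 hx, hCA.1 hx⟩
  rcases hcomp with h | h
  · exact h
  · have := hPmin A hAS h
    simp only [id] at this
    rw [this]

/-- maximal member of H strictly inside C containing a given point -/
lemma hier_exists_max {H : Set (Set L)} (hH : IsHierarchy H) (hfin : H.Finite)
    {C : Set L} (hC : C ∈ H) {x : L} (hx : x ∈ C) (hne : {x} ≠ C) :
    ∃ D, D ∈ H ∧ x ∈ D ∧ D ⊂ C ∧ ∀ A ∈ H, A ⊂ C → x ∈ A → A ⊆ D := by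
  classical
  set S : Set (Set L) := {A ∈ H | x ∈ A ∧ A ⊂ C} with hS
  have hSfin : S.Finite := hfin.subset (fun A hA => hA.1)
  have hSne : S.Nonempty := ⟨{x}, hH.2.1 x, rfl, Set.ssubset_iff_subset_ne.mpr
    ⟨Set.singleton_subset_iff.mpr hx, hne⟩⟩
  obtain ⟨D, hDS, hDmax⟩ : ∃ D ∈ S, ∀ A ∈ S, id D ≤ id A → id D = id A := by
    obtain ⟨D, hD⟩ := Set.Finite.exists_maximal hSfin hSne
    exact ⟨D, hD.1, fun A hA h => le_antisymm h (hD.2 hA h)⟩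
  refine ⟨D, hDS.1, hDS.2.1, hDS.2.2, ?_⟩
  intro A hA hAC hxA
  have hAS : A ∈ S := ⟨hA, hxA, hAC⟩
  have hcomp : D ⊆ A ∨ A ⊆ D := hier_comparable hH hDS.1 hA ⟨x, hDS.2.1, hxA⟩
  rcases hcomp with h | h
  · have := hDmax A hAS h
    simp only [id] at this
    rw [← this]
  · exact h

variable (H : Set (Set L)) (hH : IsHierarchy H) (hfin : H.Finite)

open Classical in
/-- the parent map of the hierarchy tree -/
noncomputable def hparent (C : {C : Set L // C ∈ H}) : {C : Set L // C ∈ H} :=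
  if h : C.1 = Set.univ then C
  else ⟨(hier_exists_min hH hfin C.2 h).choose, (hier_exists_min hH hfin C.2 h).choose_spec.1⟩

lemma hparent_univ (C : {C : Set L // C ∈ H}) (h : C.1 = Set.univ) : hparent H hH hfin C = C := by
  rw [hparent, dif_pos h]

lemma hparent_ssub (C : {C : Set L // C ∈ H}) (h : C.1 ≠ Set.univ) :
    C.1 ⊂ (hparent H hH hfin C).1 := by
  rw [hparent, dif_neg h]
  exact (hier_exists_min hH hfin C.2 h).choose_spec.2.1

lemma hparent_min (C : {C : Set L // C ∈ H}) (h : C.1 ≠ Set.univ) {A : Set L}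
    (hA : A ∈ H) (hCA : C.1 ⊂ A) : (hparent H hH hfin C).1 ⊆ A := by
  rw [hparent, dif_neg h]
  exact (hier_exists_min hH hfin C.2 h).choose_spec.2.2 A hA hCA

lemma hparent_sub (C : {C : Set L // C ∈ H}) : C.1 ⊆ (hparent H hH hfin C).1 := by
  by_cases h : C.1 = Set.univ
  · rw [hparent_univ H hH hfin C h]
  · exact (hparent_ssub H hH hfin C h).1

lemma hparent_iter_sub (C : {C : Set L // C ∈ H}) (n : ℕ) :
    C.1 ⊆ ((hparent H hH hfin)^[n] C).1 := by
  induction n with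
  | zero => exact subset_rfl
  | succ n ih =>
    rw [Function.iterate_succ_apply']
    exact ih.trans (hparent_sub H hH hfin _)

/-- the measure: number of strict supersets in H -/
noncomputable def hmeas (C : {C : Set L // C ∈ H}) : ℕ := {A ∈ H | C.1 ⊂ A}.ncard

lemma hmeas_lt (C : {C : Set L // C ∈ H}) (h : C.1 ≠ Set.univ) :
    hmeas H (hparent H hH hfin C) < hmeas H C := by
  apply Set.ncard_lt_ncard
  · constructor
    · intro A hA
      exact ⟨hA.1, (hparent_ssub H hH hfin C h).trans hA.2⟩
    · intro hsub
      have hP : (hparent H hH hfin C).1 ∈ {A ∈ H | C.1 ⊂ A} :=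
        ⟨(hparent H hH hfin C).2, hparent_ssub H hH hfin C h⟩
      have := hsub hP
      exact absurd rfl (Set.ssubset_iff_subset_ne.mp this.2).2
  · exact hfin.subset (fun A hA => hA.1)

lemma hparent_reach (C : {C : Set L // C ∈ H}) :
    ∃ n, (hparent H hH hfin)^[n] C = ⟨Set.univ, hH.1⟩ := by
  have key : ∀ k : ℕ, ∀ C : {C : Set L // C ∈ H}, hmeas H C ≤ k →
      ∃ n, (hparent H hH hfin)^[n] C = ⟨Set.univ, hH.1⟩ := by
    intro k
    induction k with
    | zero =>
      intro C hC
      have : C.1 = Set.univ := by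
        by_contra hne
        have : Set.univ ∈ {A ∈ H | C.1 ⊂ A} := ⟨hH.1, Set.ssubset_univ_iff.mpr hne⟩
        have hpos : 0 < hmeas H C := by
          rw [hmeas]
          exact Set.ncard_pos (hfin.subset (fun A hA => hA.1)) |>.mpr ⟨_, this⟩
        omega
      exact ⟨0, Subtype.ext this⟩
    | succ k ih =>
      intro C hC
      by_cases h : C.1 = Set.univ
      · exact ⟨0, Subtype.ext h⟩
      · obtain ⟨n, hn⟩ := ih (hparent H hH hfin C) (by
          have := hmeas_lt H hH hfin C h; omega)
        exact ⟨n + 1, by rw [Function.iterate_succ_apply]; exact hn⟩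
  exact key (hmeas H C) C le_rfl

/-- the child lemma: inside a non-singleton C ∈ H and a point of it,
there is a child of C containing the point -/
lemma hier_child {C : Set L} (hC : C ∈ H) {x : L} (hx : x ∈ C) (hne : {x} ≠ C) :
    ∃ D : {C : Set L // C ∈ H}, x ∈ D.1 ∧ D.1 ⊂ C ∧ hparent H hH hfin D = ⟨C, hC⟩ := by
  obtain ⟨D, hD, hxD, hDC, hDmax⟩ := hier_exists_max hH hfin hC hx hne
  refine ⟨⟨D, hD⟩, hxD, hDC, ?_⟩
  have hDuniv : D ≠ Set.univ := by
    intro h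
    rw [h] at hDC
    exact absurd (Set.univ_subset_iff.mp hDC.1) (by intro hh; exact hDC.2 (by rw [hh]))
  apply Subtype.ext
  apply Set.Subset.antisymm
  · exact hparent_min H hH hfin ⟨D, hD⟩ hDuniv hC hDC
  · -- C ⊆ parent D : parent D is a strict superset of D; compare with C
    by_contra hCsub
    have hPD := hparent_ssub H hH hfin ⟨D, hD⟩ hDuniv
    have hcomp : (hparent H hH hfin ⟨D, hD⟩).1 ⊆ C ∨ C ⊆ (hparent H hH hfin ⟨D, hD⟩).1 :=
      hier_comparable hH (hparent H hH hfin ⟨D, hD⟩).2 hC ⟨x, hPD.1 hxD, hx⟩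
    rcases hcomp with hsub | hsub
    · -- parent D ⊆ C; if proper then contradicts maximality of D; if equal, done
      by_cases heq : (hparent H hH hfin ⟨D, hD⟩).1 = C
      · exact hCsub (heq.ge)
      · have := hDmax _ (hparent H hH hfin ⟨D, hD⟩).2 (Set.ssubset_iff_subset_ne.mpr ⟨hsub, heq⟩)
          (hPD.1 hxD)
        exact (Set.ssubset_iff_subset_ne.mp hPD).2 (Set.Subset.antisymm this hPD.1).symm
    · exact hCsub hsub

open Classical in
/-- The tree associated with a finite hierarchy. -/
noncomputable def hierarchyTree : PhyloTree L where
  V := {C : Set L // C ∈ H}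
  fintypeV := hfin.fintype
  root := ⟨Set.univ, hH.1⟩
  parent := hparent H hH hfin
  leaf := fun x => ⟨{x}, hH.2.1 x⟩
  parent_root := hparent_univ H hH hfin _ rfl
  reach := hparent_reach H hH hfin
  leaf_inj := by
    intro x y hxy
    have : ({x} : Set L) = {y} := congrArg Subtype.val hxy
    exact Set.singleton_eq_singleton_iff.mp this
  leaf_iff := by
    intro v
    constructor
    · intro hnc
      by_contra hnl
      push_neg at hnl
      obtain ⟨x, hx⟩ := hier_nonempty hH v.2
      have hne : {x} ≠ v.1 := fun h => hnl x (Subtype.ext h)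
      obtain ⟨D, _, hDC, hDp⟩ := hier_child H hH hfin v.2 hx hne
      have := hnc D (by rw [hDp])
      rw [this] at hDC
      exact hDC.2 subset_rfl
    · rintro ⟨x, rfl⟩
      intro u hu
      by_cases h : u.1 = Set.univ
      · rw [← hu, hparent_univ H hH hfin u h]
      · exfalso
        have hss := hparent_ssub H hH hfin u h
        rw [hu] at hss
        obtain ⟨y, hy⟩ := hier_nonempty hH u.2
        have hsub : u.1 ⊆ {x} := hss.1
        have hyx : y = x := hsub hy
        have hEq : u.1 = {x} := Set.Subset.antisymm hsub
          (by rw [← hyx]; exact Set.singleton_subset_iff.mpr hy)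
        have hne2 : u.1 ≠ ({x} : Set L) := (Set.ssubset_iff_subset_ne.mp hss).2
        exact hne2 hEq
  phylo := by
    intro v hnl
    obtain ⟨x, hx⟩ := hier_nonempty hH v.2
    have hne : {x} ≠ v.1 := fun h => hnl ⟨x, Subtype.ext h⟩
    obtain ⟨D, hxD, hDC, hDp⟩ := hier_child H hH hfin v.2 hx hne
    obtain ⟨y, hyC, hyD⟩ := Set.exists_of_ssubset hDC
    have hney : {y} ≠ v.1 := fun h => hnl ⟨y, Subtype.ext h⟩
    obtain ⟨D', hyD', hD'C, hD'p⟩ := hier_child H hH hfin v.2 hyC hney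
    refine ⟨D, D', ?_, hDp, hD'p, ?_, ?_⟩
    · intro h
      rw [h] at hyD
      exact hyD hyD'
    · intro h
      rw [h] at hDC
      exact hDC.2 subset_rfl
    · intro h
      rw [h] at hD'C
      exact hD'C.2 subset_rfl

end HierarchyTree

section HierarchyTree2

variable {L : Type} (H : Set (Set L)) (hH : IsHierarchy H) (hfin : H.Finite)

lemma hierarchyTree_anc_iff (A B : {C : Set L // C ∈ H}) :
    (hierarchyTree H hH hfin).anc A B ↔ B.1 ⊆ A.1 := by
  constructor
  · rintro ⟨n, hn⟩
    have := hparent_iter_sub H hH hfin B n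
    rw [show (hierarchyTree H hH hfin).parent = hparent H hH hfin from rfl] at hn
    rw [show (hparent H hH hfin)^[n] B = A from hn] at this
    exact this
  · intro hsub
    have key : ∀ k : ℕ, ∀ B : {C : Set L // C ∈ H}, hmeas H B ≤ k → B.1 ⊆ A.1 →
        (hierarchyTree H hH hfin).anc A B := by
      intro k
      induction k with
      | zero =>
        intro B hB hsub
        by_cases heq : B = A
        · rw [heq]; exact PhyloTree.anc_refl (T := hierarchyTree H hH hfin) A
        · exfalso
          have hne : B.1 ≠ Set.univ := by
            intro h
            exact heq (Subtype.ext (by rw [h]; exact (Set.univ_subset_iff.mp (h ▸ hsub)).symm))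
          have : Set.univ ∈ {X ∈ H | B.1 ⊂ X} := ⟨hH.1, Set.ssubset_univ_iff.mpr hne⟩
          have hpos : 0 < hmeas H B :=
            (Set.ncard_pos (hfin.subset (fun X hX => hX.1))).mpr ⟨_, this⟩
          omega
      | succ k ih =>
        intro B hB hsub
        by_cases heq : B = A
        · rw [heq]; exact PhyloTree.anc_refl (T := hierarchyTree H hH hfin) A
        · have hne : B.1 ≠ Set.univ := by
            intro h
            exact heq (Subtype.ext (by rw [h]; exact (Set.univ_subset_iff.mp (h ▸ hsub)).symm))
          have hssub : B.1 ⊂ A.1 := Set.ssubset_iff_subset_ne.mpr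
            ⟨hsub, fun h => heq (Subtype.ext h)⟩
          have hPA : (hparent H hH hfin B).1 ⊆ A.1 := hparent_min H hH hfin B hne A.2 hssub
          have hm := hmeas_lt H hH hfin B hne
          obtain ⟨n, hn⟩ := ih (hparent H hH hfin B) (by omega) hPA
          exact ⟨n + 1, by show (hparent H hH hfin)^[n + 1] B = A; rw [Function.iterate_succ_apply]; exact hn⟩
    exact key (hmeas H B) B le_rfl hsub

lemma hierarchyTree_cluster (C : {C : Set L // C ∈ H}) :
    (hierarchyTree H hH hfin).cluster C = C.1 := by
  ext x
  exact (hierarchyTree_anc_iff H hH hfin C ⟨{x}, hH.2.1 x⟩).trans (by simp)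

lemma hierarchyTree_clusters : (hierarchyTree H hH hfin).clusters = H := by
  ext A
  constructor
  · rintro ⟨C, rfl⟩
    refine (congrArg (· ∈ H) (hierarchyTree_cluster H hH hfin C)).mpr ?_
    exact C.2
  · intro hA
    exact ⟨⟨A, hA⟩, hierarchyTree_cluster H hH hfin ⟨A, hA⟩⟩

end HierarchyTree2

namespace PhyloTree

variable {L : Type} {T : PhyloTree L}

lemma diff_children_ne {c c' v : T.V} (hc : T.childOf c v) (hc' : T.childOf c' v)
    (hne : c ≠ c') {x y : L} (hx : x ∈ T.cluster c) (hy : y ∈ T.cluster c') : x ≠ y := by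
  intro h
  subst h
  have := cluster_disjoint (u := c) (v := c')
    (fun hh => children_incomparable hc hc' hne hh)
    (fun hh => children_incomparable hc' hc (Ne.symm hne) hh)
  rw [Set.eq_empty_iff_forall_notMem] at this
  exact this x ⟨hx, hy⟩

lemma exists_child_of_mem {v : T.V} (hnl : ¬ T.isLeaf v) {x : L} (hx : x ∈ T.cluster v) :
    ∃ c, T.childOf c v ∧ x ∈ T.cluster c := by
  obtain ⟨c, hc, hcx⟩ := exists_child_anc hx (fun h => hnl ⟨x, h⟩)
  exact ⟨c, hc, hcx⟩

lemma exists_partner {v : T.V} (hnl : ¬ T.isLeaf v) {x : L} (hx : x ∈ T.cluster v) :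
    ∃ y, y ∈ T.cluster v ∧ y ≠ x ∧ T.isLCA x y v := by
  obtain ⟨d, d', hdd', hpd, hpd', hdv, hd'v⟩ := T.phylo v hnl
  obtain ⟨g, hg, hgx⟩ := exists_child_of_mem hnl hx
  have he : ∃ e, T.childOf e v ∧ e ≠ g := by
    by_cases h : d = g
    · exact ⟨d', ⟨hpd', hd'v⟩, by rw [← h]; exact hdd'.symm⟩
    · exact ⟨d, ⟨hpd, hdv⟩, h⟩
  obtain ⟨e, he, heg⟩ := he
  obtain ⟨y, hy⟩ := cluster_nonempty e
  refine ⟨y, cluster_mono ⟨1, he.1⟩ hy, ?_, isLCA_of_diff_children hg he (Ne.symm heg) hgx hy⟩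
  exact (diff_children_ne he hg heg hy hgx)

/-- lca of a leaf inside a child's cluster with a leaf outside it is the parent. -/
lemma isLCA_in_out {v p : T.V} (hc : T.childOf v p) {x z : L} (hx : x ∈ T.cluster v)
    (hz : z ∈ T.cluster p) (hzv : z ∉ T.cluster v) : T.isLCA x z p := by
  refine ⟨cluster_mono ⟨1, hc.1⟩ hx, hz, ?_⟩
  intro u hux huz
  rcases anc_comparable hux (hx : T.anc v (T.leaf x)) with h | h
  · -- u above v
    by_cases heq : u = v
    · exact absurd (heq ▸ huz) hzv
    · obtain ⟨k, hk⟩ := h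
      have hk1 : 1 ≤ k := by
        rcases Nat.eq_zero_or_pos k with h0 | h0
        · rw [h0] at hk; exact (heq hk.symm).elim
        · exact h0
      refine ⟨k - 1, ?_⟩
      have h2 : T.parent^[k - 1 + 1] v = u := by
        have h3 : k - 1 + 1 = k := by omega
        rw [h3]; exact hk
      rw [Function.iterate_succ_apply, hc.1] at h2
      exact h2
  · -- u below v: z would be in cluster v
    exact absurd (cluster_mono h huz) hzv

lemma childOf_parent {v : T.V} (h : v ≠ T.root) : T.childOf v (T.parent v) :=
  ⟨rfl, fun he => (parent_ne_iff.mpr h) he.symm⟩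

/-- symmetric version of explains -/
lemma isLCA_symm {x y : L} {w : T.V} (h : T.isLCA x y w) : T.isLCA y x w :=
  ⟨h.2.1, h.1, fun u hy hx => h.2.2 u hx hy⟩

end PhyloTree

namespace PhyloTree

variable {L : Type}

/-- Given two vertices with the same cluster in two trees (the first not a leaf),
there is a pair of leaves whose lca is simultaneously both vertices. -/
lemma exists_sep_pair {T1 T2 : PhyloTree L} {w1 : T1.V} {w2 : T2.V}
    (hnl : ¬ T1.isLeaf w1) (hcl : T1.cluster w1 = T2.cluster w2) :
    ∃ x y : L, x ≠ y ∧ T1.isLCA x y w1 ∧ T2.isLCA x y w2 := by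
  obtain ⟨c, c', hcc', hpc, hpc', hcv, hc'v⟩ := T1.phylo w1 hnl
  have hc : T1.childOf c w1 := ⟨hpc, hcv⟩
  have hc' : T1.childOf c' w1 := ⟨hpc', hc'v⟩
  obtain ⟨x1, hx1⟩ := cluster_nonempty c
  obtain ⟨y1, hy1⟩ := cluster_nonempty c'
  have hxy1 : x1 ≠ y1 := diff_children_ne hc hc' hcc' hx1 hy1
  have hx1w : x1 ∈ T1.cluster w1 := cluster_mono ⟨1, hpc⟩ hx1
  have hy1w : y1 ∈ T1.cluster w1 := cluster_mono ⟨1, hpc'⟩ hy1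
  have hnl2 : ¬ T2.isLeaf w2 := not_isLeaf_of_two (hcl ▸ hx1w) (hcl ▸ hy1w) hxy1
  obtain ⟨d1, hd1, hd1x⟩ := exists_child_of_mem hnl2 (hcl ▸ hx1w)
  obtain ⟨d2, hd2, hd2y⟩ := exists_child_of_mem hnl2 (hcl ▸ hy1w)
  by_cases hd : d1 = d2
  · -- both below the same child of w2; use a third leaf
    obtain ⟨e, he, hed⟩ : ∃ e, T2.childOf e w2 ∧ e ≠ d1 := by
      obtain ⟨u, u', huu', hpu, hpu', huv, hu'v⟩ := T2.phylo w2 hnl2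
      by_cases h : u = d1
      · exact ⟨u', ⟨hpu', hu'v⟩, by rw [← h]; exact huu'.symm⟩
      · exact ⟨u, ⟨hpu, huv⟩, h⟩
    obtain ⟨z, hz⟩ := cluster_nonempty e
    have hzw2 : z ∈ T2.cluster w2 := cluster_mono ⟨1, he.1⟩ hz
    have hzw1 : z ∈ T1.cluster w1 := hcl ▸ hzw2
    obtain ⟨e1, he1, he1z⟩ := exists_child_of_mem hnl hzw1
    by_cases h1 : e1 = c
    · -- use pair (y1, z)
      have hyz : y1 ≠ z := diff_children_ne hd2 he (by rw [← hd]; exact (Ne.symm hed)) hd2y hz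
      refine ⟨y1, z, hyz, ?_, ?_⟩
      · exact isLCA_of_diff_children hc' he1 (by rw [h1]; exact hcc'.symm) hy1 he1z
      · exact isLCA_of_diff_children hd2 he (by rw [← hd]; exact (Ne.symm hed)) hd2y hz
    · -- use pair (x1, z)
      have hxz : x1 ≠ z := diff_children_ne hd1 he (Ne.symm hed) hd1x hz
      refine ⟨x1, z, hxz, ?_, ?_⟩
      · exact isLCA_of_diff_children hc he1 (fun h => h1 h.symm) hx1 he1z
      · exact isLCA_of_diff_children hd1 he (Ne.symm hed) hd1x hz
  · exact ⟨x1, y1, hxy1, isLCA_of_diff_children hc hc' hcc' hx1 hy1,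
      isLCA_of_diff_children hd1 hd2 hd hd1x hd2y⟩

/-- **Key lemma**: a discriminating vertex-labeled tree explaining `δ` is
least-resolved among all trees explaining `δ`. -/
lemma delta_least {M : Type} {δ : L → L → M} {T1 : PhyloTree L} {t1 : T1.V → M}
    (hexp1 : T1.ExplainsDelta t1 δ) (hdisc : T1.Discriminating t1)
    {T2 : PhyloTree L} {t2 : T2.V → M} (hexp2 : T2.ExplainsDelta t2 δ) :
    T1.clusters ⊆ T2.clusters := by
  classical
  rintro A ⟨v, rfl⟩
  have key : ∀ n : ℕ, ∀ v : T1.V, T1.depth v ≤ n → T1.cluster v ∈ T2.clusters := by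
    intro n
    induction n with
    | zero =>
      intro v hv
      have : v = T1.root := depth_eq_zero (by omega)
      rw [this, cluster_root]
      exact ⟨T2.root, cluster_root⟩
    | succ n ih =>
      intro v hdv
      by_cases hroot : v = T1.root
      · rw [hroot, cluster_root]; exact ⟨T2.root, cluster_root⟩
      by_cases hleafv : T1.isLeaf v
      · obtain ⟨x, rfl⟩ := hleafv
        rw [cluster_leaf]
        exact ⟨T2.leaf x, cluster_leaf x⟩
      -- inner non-root vertex
      set p := T1.parent v with hp
      have hchild : T1.childOf v p := childOf_parent hroot
      have hdp : T1.depth v = T1.depth p + 1 := depth_child hchild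
      obtain ⟨w, hw⟩ := ih p (by omega)
      -- hw : T2.cluster w = T1.cluster p
      set m := t1 p with hm
      set Cv := T1.cluster v with hCv
      set C := T1.cluster p with hC
      have hCvC : Cv ⊆ C := cluster_mono ⟨1, hchild.1⟩
      have hpnl : ¬ T1.isLeaf p := by
        rintro ⟨x, hx⟩
        have h1 : T1.anc (T1.leaf x) v := by rw [hx]; exact ⟨1, hchild.1⟩
        exact hchild.2 (by rw [anc_leaf_eq h1, hx])
      -- in-out pairs get label m
      have F2 : ∀ x z : L, x ∈ Cv → z ∈ C → z ∉ Cv → x ≠ z ∧ δ x z = m := by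
        intro x z hx hz hzv
        have hne : x ≠ z := fun h => hzv (h ▸ hx)
        exact ⟨hne, (hexp1 x z hne p (isLCA_in_out hchild hx hz hzv)).symm⟩
      have F2' : ∀ x z : L, x ∈ Cv → z ∈ C → z ∉ Cv → z ≠ x ∧ δ z x = m := by
        intro x z hx hz hzv
        have hne : x ≠ z := fun h => hzv (h ▸ hx)
        exact ⟨hne.symm, (hexp1 z x hne.symm p (isLCA_symm (isLCA_in_out hchild hx hz hzv))).symm⟩
      -- the label of v is different from m
      have hvm : t1 v ≠ m := hdisc v ⟨parent_ne_iff.mpr hroot, hleafv⟩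
      -- pairs with lca v get label t1 v
      have F3 : ∀ x y : L, x ≠ y → T1.isLCA x y v → δ x y = t1 v := fun x y hne h =>
        (hexp1 x y hne v h).symm
      -- pick x0 ∈ Cv
      obtain ⟨x0, hx0⟩ := cluster_nonempty v
      obtain ⟨y0, hy0Cv, hy0ne, _⟩ := exists_partner hleafv hx0
      -- build w' := highest lca in T2 of x0 with elements of Cv
      set g : L → ℕ := fun z => Nat.find (lca_aux T2 x0 z) with hg
      have hgbound : ∀ z, g z ≤ T2.depth (T2.leaf x0) := by
        intro z
        apply Nat.find_le
        rw [depth_spec]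
        exact anc_root _
      set P : ℕ → Prop := fun k => ∃ z, z ∈ Cv ∧ z ≠ x0 ∧ g z = k with hP
      set nstar := Nat.findGreatest P (T2.depth (T2.leaf x0)) with hnstar
      have hPstar : P nstar := Nat.findGreatest_spec (hgbound y0) ⟨y0, hy0Cv, hy0ne, rfl⟩
      obtain ⟨z1, hz1Cv, hz1ne, hz1g⟩ := hPstar
      set w' := T2.lcaV x0 z1 with hw'
      have hlca' : T2.isLCA x0 z1 w' := isLCA_lcaV T2 x0 z1
      have hw'eq : T2.parent^[nstar] (T2.leaf x0) = w' := by rw [← hz1g]; rfl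
      -- all lcas with x0 are below w'
      have W1 : ∀ z, z ∈ Cv → z ≠ x0 → T2.anc w' (T2.lcaV x0 z) := by
        intro z hz hzne
        have hgz : g z ≤ nstar := by
          by_contra hlt
          push_neg at hlt
          exact Nat.findGreatest_is_greatest hlt (hgbound z) ⟨z, hz, hzne, rfl⟩
        refine ⟨nstar - g z, ?_⟩
        show T2.parent^[nstar - g z] (T2.parent^[g z] (T2.leaf x0)) = w'
        rw [← Function.iterate_add_apply, Nat.sub_add_cancel hgz]
        exact hw'eq
      have W2 : Cv ⊆ T2.cluster w' := by
        intro z hz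
        by_cases hzx : z = x0
        · rw [hzx]; exact hlca'.1
        · exact cluster_mono (W1 z hz hzx) (isLCA_lcaV T2 x0 z).2.1
      have hx0w : x0 ∈ T2.cluster w := by rw [hw]; exact hCvC hx0
      have hz1w : z1 ∈ T2.cluster w := by rw [hw]; exact hCvC hz1Cv
      have W3 : T2.cluster w' ⊆ C := by
        rw [← hw]
        exact cluster_mono (hlca'.2.2 w hx0w hz1w)
      -- main claim: cluster w' = Cv
      have hClaim : T2.cluster w' = Cv := by
        by_contra hnecl
        have hex : ∃ z2, z2 ∈ T2.cluster w' ∧ z2 ∉ Cv := by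
          by_contra hcon
          push_neg at hcon
          exact hnecl (Set.Subset.antisymm hcon W2)
        obtain ⟨z2, hz2w', hz2Cv⟩ := hex
        have hz2C : z2 ∈ C := W3 hz2w'
        have hw'nl : ¬ T2.isLeaf w' := not_isLeaf_of_two hlca'.1 hlca'.2.1 hz1ne.symm
        obtain ⟨c, c'', hcw, hc''w, hcc'', hcx0, hc''z1⟩ := lca_children hlca' hz1ne.symm
        obtain ⟨d, hd, hdz2⟩ := exists_child_of_mem hw'nl hz2w'
        have ht2 : t2 w' = m := by
          by_cases hdc : d = c
          · have h1 : T2.isLCA z1 z2 w' :=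
              isLCA_of_diff_children hc''w hd (by rw [hdc]; exact hcc''.symm) hc''z1 hdz2
            obtain ⟨hne12, hδ⟩ := F2 z1 z2 hz1Cv hz2C hz2Cv
            rw [← hδ]
            exact hexp2 z1 z2 hne12 w' h1
          · have h1 : T2.isLCA x0 z2 w' :=
              isLCA_of_diff_children hcw hd (fun h => hdc h.symm) hcx0 hdz2
            obtain ⟨hne12, hδ⟩ := F2 x0 z2 hx0 hz2C hz2Cv
            rw [← hδ]
            exact hexp2 x0 z2 hne12 w' h1
        have hx0c : x0 ∈ T2.cluster c := hcx0
        have hz1notc : z1 ∉ T2.cluster c := by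
          intro h
          exact (diff_children_ne hcw hc''w hcc'' h hc''z1) rfl
        have CROSS : ∀ x y : L, x ∈ Cv → y ∈ Cv → x ∈ T2.cluster c → y ∉ T2.cluster c →
            δ x y = m := by
          intro x y hxCv hyCv hxc hyc
          obtain ⟨e, he, hey⟩ := exists_child_of_mem hw'nl (W2 hyCv)
          have hec : e ≠ c := fun h => hyc (h ▸ hey)
          have h1 : T2.isLCA x y w' := isLCA_of_diff_children hcw he (Ne.symm hec) hxc hey
          have hnexy : x ≠ y := diff_children_ne hcw he (Ne.symm hec) hxc hey
          rw [← ht2]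
          exact (hexp2 x y hnexy w' h1).symm
        obtain ⟨g1, hg1, hg1x⟩ := exists_child_of_mem hleafv hx0
        obtain ⟨g2, hg2, hg2z⟩ := exists_child_of_mem hleafv hz1Cv
        by_cases hgg : g1 = g2
        · obtain ⟨e', he', he'g⟩ : ∃ e', T1.childOf e' v ∧ e' ≠ g1 := by
            obtain ⟨u, u', huu', hpu, hpu', huv, hu'v⟩ := T1.phylo v hleafv
            by_cases h : u = g1
            · exact ⟨u', ⟨hpu', hu'v⟩, by rw [← h]; exact huu'.symm⟩
            · exact ⟨u, ⟨hpu, huv⟩, h⟩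
          obtain ⟨y'', hy''⟩ := cluster_nonempty e'
          have hy''Cv : y'' ∈ Cv := cluster_mono ⟨1, he'.1⟩ hy''
          by_cases hyc : y'' ∈ T2.cluster c
          · have hδ1 : δ y'' z1 = t1 v := F3 y'' z1
              (diff_children_ne he' hg2 (hgg ▸ he'g) hy'' hg2z)
              (isLCA_of_diff_children he' hg2 (hgg ▸ he'g) hy'' hg2z)
            have hδ2 : δ y'' z1 = m := CROSS y'' z1 hy''Cv hz1Cv hyc hz1notc
            exact hvm (by rw [← hδ1, hδ2])
          · have hδ1 : δ x0 y'' = t1 v := F3 x0 y''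
              (diff_children_ne hg1 he' (Ne.symm he'g) hg1x hy'')
              (isLCA_of_diff_children hg1 he' (Ne.symm he'g) hg1x hy'')
            have hδ2 : δ x0 y'' = m := CROSS x0 y'' hx0 hy''Cv hx0c hyc
            exact hvm (by rw [← hδ1, hδ2])
        · have hδ1 : δ x0 z1 = t1 v := F3 x0 z1
            (diff_children_ne hg1 hg2 hgg hg1x hg2z)
            (isLCA_of_diff_children hg1 hg2 hgg hg1x hg2z)
          have hδ2 : δ x0 z1 = m := CROSS x0 z1 hx0 hz1Cv hx0c hz1notc
          exact hvm (by rw [← hδ1, hδ2])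
      rw [← hClaim]
      exact ⟨w', rfl⟩
  exact key (T1.depth v) v le_rfl
end PhyloTree

namespace PhyloTree

variable {L : Type}

section Contract

variable {T T' : PhyloTree L} {u : T.V} {φ : T.V → T'.V}

lemma contract_push (h : IsContractionMap T u T' φ) (w : T.V) (n : ℕ) :
    ∃ m, T'.parent^[m] (φ w) = φ (T.parent^[n] w) := by
  obtain ⟨hinner, hsurj, hu, hinj, hpar, hleaf, hroot⟩ := h
  induction n with
  | zero => exact ⟨0, rfl⟩
  | succ n ih =>
    obtain ⟨m, hm⟩ := ih
    by_cases hcase : T.parent^[n] w = u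
    · have heq : φ (T.parent^[n+1] w) = φ (T.parent^[n] w) := by
        rw [Function.iterate_succ_apply', hcase, ← hu, ← hcase]
      exact ⟨m, by rw [heq, hm]⟩
    · refine ⟨m + 1, ?_⟩
      rw [Function.iterate_succ_apply', Function.iterate_succ_apply', hm, hpar _ hcase]

lemma contract_pull (h : IsContractionMap T u T' φ) (w : T.V) (m : ℕ) :
    ∃ n, T'.parent^[m] (φ w) = φ (T.parent^[n] w) := by
  obtain ⟨hinner, hsurj, hu, hinj, hpar, hleaf, hroot⟩ := h
  induction m with
  | zero => exact ⟨0, rfl⟩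
  | succ m ih =>
    obtain ⟨n, hn⟩ := ih
    by_cases hcase : T.parent^[n] w = u
    · refine ⟨n + 2, ?_⟩
      rw [Function.iterate_succ_apply', hn, hcase, hu, hpar _ hinner.1]
      have h2 : T.parent^[n+2] w = T.parent (T.parent (T.parent^[n] w)) := by
        rw [Function.iterate_succ_apply', Function.iterate_succ_apply']
      rw [h2, hcase]
    · refine ⟨n + 1, ?_⟩
      rw [Function.iterate_succ_apply', hn, hpar _ hcase, Function.iterate_succ_apply']

lemma contract_anc (h : IsContractionMap T u T' φ) {v w : T.V} (hanc : T.anc v w) :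
    T'.anc (φ v) (φ w) := by
  obtain ⟨n, hn⟩ := hanc
  obtain ⟨m, hm⟩ := contract_push h w n
  exact ⟨m, by rw [hm, hn]⟩

lemma contract_cluster_ne (h : IsContractionMap T u T' φ) {v : T.V} (hv : v ≠ u) :
    T'.cluster (φ v) = T.cluster v := by
  ext x
  simp only [mem_cluster]
  constructor
  · rintro ⟨m, hm⟩
    rw [← h.2.2.2.2.2.1 x] at hm
    obtain ⟨n, hn⟩ := contract_pull h (T.leaf x) m
    rw [hn] at hm
    rcases h.2.2.2.1 _ _ hm with heq | ⟨h1, h2⟩ | ⟨h1, h2⟩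
    · exact ⟨n, heq⟩
    · -- T.parent^[n] (leaf x) = u and v = parent u
      refine ⟨n + 1, ?_⟩
      rw [Function.iterate_succ_apply', h1, ← h2]
    · exact absurd h1 hv
  · intro hx
    have := contract_anc h hx
    rw [h.2.2.2.2.2.1 x] at this
    exact this

lemma contract_cluster_u (h : IsContractionMap T u T' φ) :
    T'.cluster (φ u) = T.cluster (T.parent u) := by
  rw [h.2.2.1]
  exact contract_cluster_ne h h.1.1

lemma contract_not_mem (h : IsContractionMap T u T' φ) : T.cluster u ∉ T'.clusters := by
  rintro ⟨w', hw'⟩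
  obtain ⟨v, rfl⟩ := h.2.1 w'
  by_cases hv : v = u
  · subst hv
    rw [contract_cluster_u h] at hw'
    exact h.1.1 (cluster_inj hw')
  · rw [contract_cluster_ne h hv] at hw'
    exact hv (cluster_inj hw')

end Contract

/-- glue lemma: lcas of pairs with common lca in a refined tree coincide in a coarser tree. -/
lemma star_lca_glue {S R : PhyloTree L} (hsub : S.clusters ⊆ R.clusters)
    {x y x' y' : L} {w : R.V} {v v' : S.V}
    (hw : R.isLCA x y w) (hw' : R.isLCA x' y' w)
    (hv : S.isLCA x y v) (hv' : S.isLCA x' y' v') : v = v' := by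
  have key : ∀ (a b : L) (vab : S.V), R.isLCA a b w → S.isLCA a b vab →
      R.cluster w ⊆ S.cluster vab := by
    intro a b vab hwab hvab
    obtain ⟨s, hs⟩ := hsub ⟨vab, rfl⟩
    have ha : a ∈ R.cluster s := by rw [hs]; exact hvab.1
    have hb : b ∈ R.cluster s := by rw [hs]; exact hvab.2.1
    have := lca_cluster_min hwab ha hb
    rw [hs] at this
    exact this
  have h1 : R.cluster w ⊆ S.cluster v := key x y v hw hv
  have h2 : R.cluster w ⊆ S.cluster v' := key x' y' v' hw' hv'
  apply cluster_inj (T := S)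
  apply Set.Subset.antisymm
  · exact lca_cluster_min hv (h2 hw.1) (h2 hw.2.1)
  · exact lca_cluster_min hv' (h1 hw'.1) (h1 hw'.2.1)

lemma labelSum_le {N : Type} {T : PhyloTree L} {l1 l2 : T.V → Finset N}
    (h : ∀ v, T.parent v ≠ v → l1 v ⊆ l2 v) : T.labelSum l1 ≤ T.labelSum l2 := by
  letI := T.fintypeV
  letI := Classical.decEq T.V
  unfold labelSum
  apply Finset.sum_le_sum
  intro v _
  by_cases hv : T.parent v = v
  · simp [hv]
  · simp only [if_neg hv]
    exact Finset.card_le_card (h v hv)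

lemma labelSum_eq_forces {N : Type} {T : PhyloTree L} {l1 l2 : T.V → Finset N}
    (h : ∀ v, T.parent v ≠ v → l1 v ⊆ l2 v) (heq : T.labelSum l2 = T.labelSum l1) :
    ∀ v, T.parent v ≠ v → l2 v = l1 v := by
  letI := T.fintypeV
  letI := Classical.decEq T.V
  by_contra hc
  push_neg at hc
  obtain ⟨v0, hv0, hne⟩ := hc
  have hlt : T.labelSum l1 < T.labelSum l2 := by
    unfold labelSum
    apply Finset.sum_lt_sum
    · intro v _
      by_cases hv : T.parent v = v
      · simp [hv]
      · simp only [if_neg hv]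
        exact Finset.card_le_card (h v hv)
    · refine ⟨v0, Finset.mem_univ _, ?_⟩
      simp only [if_neg hv0]
      exact Finset.card_lt_card (Finset.ssubset_iff_subset_ne.mpr ⟨h v0 hv0, fun he => hne he.symm⟩)
  omega

end PhyloTree

/-- If `(δ,ε)` is tree-like, then there is a unique
least-resolved doubly labeled tree `(T*,t*,λ*)` explaining `(δ,ε)`: its cluster
system is `H(T_δ) ∪ H(T_ε)` (determining `T*` up to isomorphism), `t*` is
uniquely determined by `δ`, `λ*` is the unique edge labeling of `T*` explaining
`ε` of minimum total label count, and contracting any inner edge of `T*` yields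
a tree that cannot explain `(δ,ε)` with any labelings. -/
theorem statement10 {L M N : Type} (δ : L → L → M) (ε : L → L → Finset N)
    (hTL : PhyloTree.TreeLike δ ε)
    (Tδ : PhyloTree L) (tδ : Tδ.V → M)
    (hδexp : Tδ.ExplainsDelta tδ δ) (hδdisc : Tδ.Discriminating tδ)
    (Tε : PhyloTree L) (lamε : Tε.V → Finset N) (hεexp : Tε.ExplainsEps lamε ε)
    (hεleast : ∀ (T : PhyloTree L) (lam : T.V → Finset N),
      T.ExplainsEps lam ε → PhyloTree.LeLabeled Tε lamε T lam) :
    ∃ (Tstar : PhyloTree L) (tstar : Tstar.V → M) (lstar : Tstar.V → Finset N),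
      Tstar.clusters = Tδ.clusters ∪ Tε.clusters ∧
      Tstar.ExplainsDelta tstar δ ∧ Tstar.ExplainsEps lstar ε ∧
      (∀ T' : PhyloTree L, T'.clusters = Tδ.clusters ∪ Tε.clusters →
        T'.Isomorphic Tstar) ∧
      (∀ t' : Tstar.V → M, Tstar.ExplainsDelta t' δ →
        ∀ v : Tstar.V, ¬ Tstar.isLeaf v → t' v = tstar v) ∧
      (∀ l' : Tstar.V → Finset N, Tstar.ExplainsEps l' ε →
        Tstar.labelSum lstar ≤ Tstar.labelSum l') ∧
      (∀ l' : Tstar.V → Finset N, Tstar.ExplainsEps l' ε →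
        Tstar.labelSum l' = Tstar.labelSum lstar →
        ∀ v : Tstar.V, Tstar.parent v ≠ v → l' v = lstar v) ∧
      (∀ u : Tstar.V, Tstar.innerEdge u → ∀ T' : PhyloTree L,
        PhyloTree.ContractEdge Tstar u T' →
        ¬ ∃ (t' : T'.V → M) (l' : T'.V → Finset N),
            T'.ExplainsDelta t' δ ∧ T'.ExplainsEps l' ε) := by
  classical
  obtain ⟨Tw, tw, lamw, hwd, hwe⟩ := hTL
  have hδsub : Tδ.clusters ⊆ Tw.clusters := PhyloTree.delta_least hδexp hδdisc hwd
  have hεsub : Tε.clusters ⊆ Tw.clusters := (hεleast Tw lamw hwe).1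
  set H : Set (Set L) := Tδ.clusters ∪ Tε.clusters with hHdef
  have hHsub : H ⊆ Tw.clusters := Set.union_subset hδsub hεsub
  have hHier : IsHierarchy H := by
    refine ⟨?_, ?_, ?_, ?_⟩
    · exact Or.inl ⟨Tδ.root, PhyloTree.cluster_root⟩
    · intro x; exact Or.inl ⟨Tδ.leaf x, PhyloTree.cluster_leaf x⟩
    · intro A hA B hB
      exact (PhyloTree.clusters_hierarchy Tw).2.2.1 A (hHsub hA) B (hHsub hB)
    · intro hmem; exact (PhyloTree.clusters_hierarchy Tw).2.2.2 (hHsub hmem)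
  have hHfin : H.Finite := by
    haveI := Tw.fintypeV
    exact (Set.finite_range Tw.cluster).subset hHsub
  set Tstar := hierarchyTree H hHier hHfin with hTstarDef
  have hclusters : Tstar.clusters = Tδ.clusters ∪ Tε.clusters :=
    hierarchyTree_clusters H hHier hHfin
  have hδstar : Tδ.clusters ⊆ Tstar.clusters := by
    rw [hclusters]; exact Set.subset_union_left
  have hεstar : Tε.clusters ⊆ Tstar.clusters := by
    rw [hclusters]; exact Set.subset_union_right
  -- the vertex labeling
  set tstar : Tstar.V → M := fun w =>
    if h : ∃ p : L × L, p.1 ≠ p.2 ∧ Tstar.isLCA p.1 p.2 w then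
      δ h.choose.1 h.choose.2
    else tδ Tδ.root with htstarDef
  have htstar : Tstar.ExplainsDelta tstar δ := by
    intro x y hxy w hw
    have hex : ∃ p : L × L, p.1 ≠ p.2 ∧ Tstar.isLCA p.1 p.2 w := ⟨(x, y), hxy, hw⟩
    have : tstar w = δ hex.choose.1 hex.choose.2 := by
      rw [htstarDef]; exact dif_pos hex
    rw [this]
    obtain ⟨hab, habw⟩ := hex.choose_spec
    have hva : Tδ.isLCA hex.choose.1 hex.choose.2 (Tδ.lcaV hex.choose.1 hex.choose.2) :=
      PhyloTree.isLCA_lcaV Tδ _ _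
    have hvx : Tδ.isLCA x y (Tδ.lcaV x y) := PhyloTree.isLCA_lcaV Tδ x y
    have hglue := PhyloTree.star_lca_glue hδstar habw hw hva hvx
    calc δ hex.choose.1 hex.choose.2 = tδ (Tδ.lcaV hex.choose.1 hex.choose.2) :=
          (hδexp _ _ hab _ hva).symm
      _ = tδ (Tδ.lcaV x y) := by rw [hglue]
      _ = δ x y := hδexp x y hxy _ hvx
  -- the edge labeling
  set lstar : Tstar.V → Finset N := fun w =>
    if h : ∃ u' : Tε.V, Tε.cluster u' = Tstar.cluster w ∧ u' ≠ Tε.root then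
      lamε h.choose
    else ∅ with hlstarDef
  have hεexpand : ∀ x y : L, x ≠ y → ∀ w : Tstar.V, Tstar.isLCA x y w →
      Tstar.cluster w ⊆ Tε.cluster (Tε.lcaV x y) := by
    intro x y hxy w hw
    obtain ⟨s, hs⟩ := hεstar ⟨Tε.lcaV x y, rfl⟩
    have hx : x ∈ Tstar.cluster s := by rw [hs]; exact (PhyloTree.isLCA_lcaV Tε x y).1
    have hy : y ∈ Tstar.cluster s := by rw [hs]; exact (PhyloTree.isLCA_lcaV Tε x y).2.1
    have := PhyloTree.lca_cluster_min hw hx hy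
    rw [hs] at this
    exact this
  have hlstar : Tstar.ExplainsEps lstar ε := by
    intro x y hxy w hw k
    set vε := Tε.lcaV x y with hvεdef
    have hvε : Tε.isLCA x y vε := PhyloTree.isLCA_lcaV Tε x y
    rw [hεexp x y hxy vε hvε k]
    constructor
    · rintro ⟨u', ⟨hancu', hu'ne, hancu'y⟩, hk⟩
      obtain ⟨s, hs⟩ := hεstar ⟨u', rfl⟩
      have hCsub : Tε.cluster u' ⊆ Tε.cluster vε := PhyloTree.cluster_mono hancu'
      have hCne : Tε.cluster u' ≠ Tε.cluster vε := fun h =>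
        hu'ne (PhyloTree.cluster_inj h)
      have hxC : x ∉ Tε.cluster u' := by
        intro hxC
        have hyC : y ∈ Tε.cluster u' := hancu'y
        exact hCne (Set.Subset.antisymm hCsub (PhyloTree.lca_cluster_min hvε hxC hyC))
      have hyC : y ∈ Tε.cluster u' := hancu'y
      have hyw : y ∈ Tstar.cluster w := hw.2.1
      have hys : y ∈ Tstar.cluster s := by rw [hs]; exact hyC
      have hcomp := PhyloTree.anc_comparable (w := Tstar.leaf y) hys hyw
      have hanc_ws : Tstar.anc w s := by
        rcases hcomp with h | h
        · -- s above w: then x ∈ cluster s = cluster u', contradiction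
          exfalso
          have : x ∈ Tstar.cluster s := PhyloTree.cluster_mono h hw.1
          rw [hs] at this
          exact hxC this
        · exact h
      have hsnew : s ≠ w := by
        intro he
        subst he
        have : x ∈ Tstar.cluster s := hw.1
        rw [hs] at this
        exact hxC this
      refine ⟨s, ⟨hanc_ws, hsnew, ?_⟩, ?_⟩
      · have : y ∈ Tstar.cluster s := hys
        exact this
      · -- k ∈ lstar s
        have hex : ∃ u'' : Tε.V, Tε.cluster u'' = Tstar.cluster s ∧ u'' ≠ Tε.root :=
          ⟨u', hs.symm, fun h => by
            rw [h, PhyloTree.cluster_root] at hCsub hCne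
            exact hCne (Set.Subset.antisymm hCsub (by simp))⟩
        have hls : lstar s = lamε hex.choose := by rw [hlstarDef]; exact dif_pos hex
        have hchoose := hex.choose_spec
        have : hex.choose = u' := PhyloTree.cluster_inj (T := Tε) (by rw [hchoose.1, hs])
        rw [hls, this]
        exact hk
    · rintro ⟨s, ⟨hanc_ws, hsnew, hanc_sy⟩, hk⟩
      have hlsne : lstar s ≠ ∅ := by
        intro h; rw [h] at hk; exact absurd hk (Finset.notMem_empty k)
      have hex : ∃ u'' : Tε.V, Tε.cluster u'' = Tstar.cluster s ∧ u'' ≠ Tε.root := by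
        by_contra hno
        exact hlsne (by rw [hlstarDef]; exact dif_neg hno)
      have hls : lstar s = lamε hex.choose := by rw [hlstarDef]; exact dif_pos hex
      set u'' := hex.choose with hu''def
      obtain ⟨hu''cl, hu''ne⟩ := hex.choose_spec
      have hyu'' : y ∈ Tε.cluster u'' := by
        rw [hu''cl]; exact hanc_sy
      have hyvε : y ∈ Tε.cluster vε := hvε.2.1
      have hxnot : x ∉ Tε.cluster u'' := by
        intro hxC
        have hxs : x ∈ Tstar.cluster s := by rw [← hu''cl]; exact hxC
        have hys : y ∈ Tstar.cluster s := hanc_sy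
        have hsub2 := PhyloTree.lca_cluster_min hw hxs hys
        have hanc_sw : Tstar.anc s w := PhyloTree.cluster_subset_iff.mp hsub2
        exact hsnew (PhyloTree.anc_antisymm hanc_sw hanc_ws)
      have hancvu : Tε.anc vε u'' := by
        rcases PhyloTree.anc_comparable (w := Tε.leaf y) (hyu'' : Tε.anc u'' _)
          (hyvε : Tε.anc vε _) with h | h
        · exact absurd (PhyloTree.cluster_mono h hvε.1) hxnot
        · exact h
      have hune : u'' ≠ vε := fun he => hxnot (he ▸ hvε.1)
      refine ⟨u'', ⟨hancvu, hune, hyu''⟩, ?_⟩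
      rw [hls] at hk
      exact hk
  -- pointwise subset property of lstar
  have hpoint : ∀ (l' : Tstar.V → Finset N), Tstar.ExplainsEps l' ε →
      ∀ v : Tstar.V, Tstar.parent v ≠ v → lstar v ⊆ l' v := by
    intro l' hl' v hv
    by_cases h : ∃ u' : Tε.V, Tε.cluster u' = Tstar.cluster v ∧ u' ≠ Tε.root
    · have hls : lstar v = lamε h.choose := by rw [hlstarDef]; exact dif_pos h
      obtain ⟨hcl, hne⟩ := h.choose_spec
      have := (hεleast Tstar l' hl').2 h.choose v (PhyloTree.parent_ne_iff.mpr hne) hv hcl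
      rw [hls]; exact this
    · have hls : lstar v = ∅ := by rw [hlstarDef]; exact dif_neg h
      rw [hls]; exact Finset.empty_subset _
  refine ⟨Tstar, tstar, lstar, hclusters, htstar, hlstar, ?_, ?_, ?_, ?_, ?_⟩
  · intro T' hT'
    exact PhyloTree.iso_of_clusters_eq (hT'.trans hclusters.symm)
  · intro t' ht' v hnl
    obtain ⟨x, hx⟩ := PhyloTree.cluster_nonempty v
    obtain ⟨y, hyC, hyne, hlca⟩ := PhyloTree.exists_partner hnl hx
    have h1 : t' v = δ x y := ht' x y (Ne.symm hyne) v hlca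
    have h2 : tstar v = δ x y := htstar x y (Ne.symm hyne) v hlca
    rw [h1, h2]
  · intro l' hl'
    exact PhyloTree.labelSum_le (hpoint l' hl')
  · intro l' hl' hsum v hv
    exact PhyloTree.labelSum_eq_forces (hpoint l' hl') hsum v hv
  · rintro u hinner T' ⟨φ, hφ⟩ ⟨t', l', hd', he'⟩
    have hδ' : Tδ.clusters ⊆ T'.clusters := PhyloTree.delta_least hδexp hδdisc hd'
    have hε' : Tε.clusters ⊆ T'.clusters := (hεleast T' l' he').1
    have hmem : Tstar.cluster u ∈ T'.clusters := by
      have h0 : Tstar.cluster u ∈ Tstar.clusters := ⟨u, rfl⟩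
      rw [hclusters] at h0
      rcases h0 with h | h
      · exact hδ' h
      · exact hε' h
    exact PhyloTree.contract_not_mem hφ hmem
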